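/- For every real g with 0 < g ≤ exp(−π), the derivative of the function g ↦ 1/(24g) + ∑_{n=1}^{∞} n (−1)^n g^{n−1} / (1 + (−g)^n) is negative; that is, −1/(24 g²) + ∑_{n=1}^{∞} ( n(n−1)(−1)^n g^{n−2} / (1 + (−g)^n) − n² g^{2(n−1)} / (1 + (−g)^n)² ) < 0. -/

import Mathlib

noncomputable def Fterm (n : ℕ) (x : ℝ) : ℝ :=
  ((n : ℝ) + 1) * (-1) ^ (n + 1) * x ^ n / (1 + (-x) ^ (n + 1))

noncomputable def Fterm' (n : ℕ) (x : ℝ) : ℝ :=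
  ((n : ℝ) + 1) * (n : ℝ) * (-1) ^ (n + 1) * x ^ (n - 1) / (1 + (-x) ^ (n + 1))
    - ((n : ℝ) + 1) ^ 2 * x ^ (2 * n) / (1 + (-x) ^ (n + 1)) ^ 2

lemma denom_lb {x : ℝ} (hx0 : 0 ≤ x) (hx1 : x ≤ 1) (n : ℕ) :
    1 - x ≤ 1 + (-x) ^ (n + 1) := by
  have h1 : x ^ (n + 1) ≤ x ^ 1 := pow_le_pow_of_le_one hx0 hx1 (by omega)
  have h2 : -(x ^ (n + 1)) ≤ (-x) ^ (n + 1) := by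
    rcases Nat.even_or_odd (n + 1) with he | ho
    · rw [he.neg_pow]; nlinarith [pow_nonneg hx0 (n + 1)]
    · rw [ho.neg_pow]
  simp only [pow_one] at h1
  linarith

lemma hasDerivAt_Fterm {x : ℝ} (hx0 : 0 < x) (hx1 : x < 1) (n : ℕ) :
    HasDerivAt (Fterm n) (Fterm' n x) x := by
  have hv : (0:ℝ) < 1 + (-x) ^ (n + 1) := by
    have := denom_lb hx0.le hx1.le n; linarith
  have hu : HasDerivAt (fun y : ℝ => ((n : ℝ) + 1) * (-1) ^ (n + 1) * y ^ n)
      (((n : ℝ) + 1) * (-1) ^ (n + 1) * ((n : ℝ) * x ^ (n - 1))) x :=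
    (hasDerivAt_pow n x).const_mul _
  have hvd : HasDerivAt (fun y : ℝ => 1 + (-y) ^ (n + 1))
      (((n : ℝ) + 1) * (-x) ^ n * (-1)) x := by
    have : HasDerivAt (fun y : ℝ => (-y) ^ (n + 1))
        ((((n:ℕ) + 1 : ℕ) : ℝ) * (-x) ^ (n + 1 - 1) * (-1)) x := (hasDerivAt_neg x).pow (n + 1)
    have h2 := this.const_add (1:ℝ)
    push_cast at h2
    simpa using h2
  have h := hu.div hvd hv.ne'
  refine h.congr_deriv ?_
  symm
  unfold Fterm'
  have hx2 : x ^ (2 * n) = x ^ n * x ^ n := by rw [two_mul, pow_add]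
  rw [hx2]
  rcases Nat.even_or_odd n with he | ho
  · have h1 : ((-1:ℝ)) ^ (n + 1) = -1 := (he.add_one).neg_one_pow
    have h2 : (-x) ^ (n + 1) = -(x ^ (n + 1)) := (he.add_one).neg_pow x
    have h3 : (-x) ^ n = x ^ n := he.neg_pow x
    rw [h1, h2, h3]
    have hv' : (0:ℝ) < 1 + -(x ^ (n+1)) := by rw [← h2]; exact hv
    field_simp
  · have h1 : ((-1:ℝ)) ^ (n + 1) = 1 := (ho.add_one).neg_one_pow
    have h2 : (-x) ^ (n + 1) = x ^ (n + 1) := (ho.add_one).neg_pow x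
    have h3 : (-x) ^ n = -(x ^ n) := ho.neg_pow x
    rw [h1, h2, h3]
    have hv' : (0:ℝ) < 1 + x ^ (n+1) := by rw [← h2]; exact hv
    field_simp

lemma Fterm'_bound {x : ℝ} (hx0 : 0 < x) (hx : x ≤ 1 / 19) (n : ℕ) :
    ‖Fterm' n x‖ ≤ 57 * ((n : ℝ) + 1) ^ 2 * (1 / 19) ^ n := by
  have hx1 : x ≤ 1 := by linarith
  have hv : (18 : ℝ) / 19 ≤ 1 + (-x) ^ (n + 1) := by
    have := denom_lb hx0.le hx1 n; linarith
  have hvpos : (0 : ℝ) < 1 + (-x) ^ (n + 1) := by linarith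
  have hxp : ∀ k : ℕ, x ^ k ≤ (1 / 19 : ℝ) ^ k := fun k => pow_le_pow_left₀ hx0.le hx k
  have hp1 : x ^ (n - 1) ≤ 19 * (1 / 19 : ℝ) ^ n := by
    calc x ^ (n - 1) ≤ (1 / 19 : ℝ) ^ (n - 1) := hxp _
      _ ≤ 19 * (1 / 19) ^ n := by
          cases n with
          | zero => norm_num
          | succ m =>
            rw [Nat.succ_sub_one, pow_succ]
            have : (19 : ℝ) * ((1 / 19) ^ m * (1 / 19)) = (1 / 19) ^ m := by ring
            linarith
  have hp2 : x ^ (2 * n) ≤ (1 / 19 : ℝ) ^ n := by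
    calc x ^ (2 * n) ≤ (1 / 19 : ℝ) ^ (2 * n) := hxp _
      _ ≤ (1 / 19) ^ n := pow_le_pow_of_le_one (by norm_num) (by norm_num) (by omega)
  have hpn : (0 : ℝ) ≤ (1 / 19 : ℝ) ^ n := by positivity
  have hn0 : (0 : ℝ) ≤ (n : ℝ) := Nat.cast_nonneg n
  have hxn1 : (0:ℝ) ≤ x ^ (n-1) := by positivity
  have hx2n : (0:ℝ) ≤ x ^ (2*n) := by positivity
  rw [Real.norm_eq_abs, Fterm']
  have hA : |((n : ℝ) + 1) * (n : ℝ) * (-1) ^ (n + 1) * x ^ (n - 1) / (1 + (-x) ^ (n + 1))|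
      ≤ ((n : ℝ) + 1) * (n : ℝ) * (19 * (1 / 19) ^ n) / (18 / 19) := by
    rw [abs_div, abs_of_pos hvpos]
    apply div_le_div₀ (by positivity) ?_ (by norm_num) hv
    have : |((n : ℝ) + 1) * (n : ℝ) * (-1) ^ (n + 1) * x ^ (n - 1)|
        = ((n : ℝ) + 1) * (n : ℝ) * x ^ (n - 1) := by
      rw [abs_mul, abs_mul, abs_mul, abs_pow, abs_neg, abs_one, one_pow, mul_one,
        abs_of_nonneg (by positivity : (0:ℝ) ≤ (n:ℝ)+1), abs_of_nonneg hn0,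
        abs_of_nonneg hxn1]
    rw [this]
    exact mul_le_mul_of_nonneg_left hp1 (by positivity)
  have hB : |((n : ℝ) + 1) ^ 2 * x ^ (2 * n) / (1 + (-x) ^ (n + 1)) ^ 2|
      ≤ ((n : ℝ) + 1) ^ 2 * (1 / 19) ^ n / ((18 / 19) ^ 2) := by
    rw [abs_div, abs_of_pos (by positivity : (0:ℝ) < (1 + (-x) ^ (n + 1)) ^ 2)]
    apply div_le_div₀ (by positivity) ?_ (by norm_num) (by nlinarith)
    rw [abs_mul, abs_of_nonneg (by positivity : (0:ℝ) ≤ ((n:ℝ)+1)^2), abs_of_nonneg hx2n]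
    exact mul_le_mul_of_nonneg_left hp2 (by positivity)
  calc |_ - _| ≤ _ := abs_sub _ _
    _ ≤ ((n : ℝ) + 1) * (n : ℝ) * (19 * (1 / 19) ^ n) / (18 / 19)
        + ((n : ℝ) + 1) ^ 2 * (1 / 19) ^ n / ((18 / 19) ^ 2) := add_le_add hA hB
    _ ≤ 57 * ((n : ℝ) + 1) ^ 2 * (1 / 19) ^ n := by
        have h1 : ((n : ℝ) + 1) * (n : ℝ) * (19 * (1 / 19) ^ n) / (18 / 19)
            = (361/18) * (((n:ℝ)+1) * (n:ℝ) * (1/19)^n) := by ring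
        have h2 : ((n : ℝ) + 1) ^ 2 * (1 / 19) ^ n / ((18 / 19) ^ 2)
            = (361/324) * (((n:ℝ)+1)^2 * (1/19)^n) := by ring
        rw [h1, h2]
        nlinarith [mul_nonneg (mul_nonneg hn0 hn0) hpn, mul_nonneg hn0 hpn]

lemma summable_u : Summable (fun n : ℕ => 57 * ((n : ℝ) + 1) ^ 2 * (1 / 19) ^ n) := by
  have hr : ‖(1/19 : ℝ)‖ < 1 := by
    rw [Real.norm_eq_abs, abs_of_pos (by norm_num : (0:ℝ) < 1/19)]; norm_num
  have h2 := summable_pow_mul_geometric_of_norm_lt_one (R := ℝ) 2 hr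
  have h1 := summable_pow_mul_geometric_of_norm_lt_one (R := ℝ) 1 hr
  have h0 := summable_geometric_of_norm_lt_one hr
  have h := (h2.add ((h1.mul_left 2).add h0)).mul_left 57
  apply h.congr
  intro n
  ring

lemma Fterm_bound {x : ℝ} (hx0 : 0 < x) (hx : x ≤ 1 / 19) (n : ℕ) :
    ‖Fterm n x‖ ≤ 57 * ((n : ℝ) + 1) ^ 2 * (1 / 19) ^ n := by
  have hx1 : x ≤ 1 := by linarith
  have hv : (18 : ℝ) / 19 ≤ 1 + (-x) ^ (n + 1) := by
    have := denom_lb hx0.le hx1 n; linarith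
  have hvpos : (0 : ℝ) < 1 + (-x) ^ (n + 1) := by linarith
  have hpn : (0 : ℝ) ≤ (1 / 19 : ℝ) ^ n := by positivity
  have hxp : x ^ n ≤ (1 / 19 : ℝ) ^ n := pow_le_pow_left₀ hx0.le hx n
  rw [Fterm, Real.norm_eq_abs, abs_div, abs_of_pos hvpos, abs_mul, abs_mul, abs_pow, abs_neg,
    abs_one, one_pow, mul_one, abs_of_nonneg (by positivity : (0:ℝ) ≤ (n:ℝ)+1),
    abs_of_nonneg (by positivity : (0:ℝ) ≤ x ^ n)]
  calc ((n : ℝ) + 1) * x ^ n / (1 + (-x) ^ (n + 1))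
      ≤ ((n : ℝ) + 1) * (1 / 19) ^ n / (18 / 19) :=
        div_le_div₀ (by positivity) (mul_le_mul_of_nonneg_left hxp (by positivity))
          (by norm_num) hv
    _ ≤ 57 * ((n : ℝ) + 1) ^ 2 * (1 / 19) ^ n := by
        have : ((n : ℝ) + 1) * (1 / 19) ^ n / (18 / 19)
            = (19/18) * (((n:ℝ)+1) * (1/19)^n) := by ring
        rw [this]
        nlinarith [mul_nonneg (Nat.cast_nonneg n : (0:ℝ) ≤ n) hpn,
          mul_nonneg (mul_nonneg (Nat.cast_nonneg n : (0:ℝ) ≤ n) (Nat.cast_nonneg n : (0:ℝ) ≤ n)) hpn]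

lemma nat_mul_le_pow (n : ℕ) : ((n : ℝ) + 1) * (n : ℝ) ≤ 3 * 2 ^ n := by
  induction n with
  | zero => norm_num
  | succ m ih =>
    have h2 : ((m : ℝ) + 1) ≤ 2 ^ m := by
      have := Nat.lt_two_pow_self (n := m)
      exact_mod_cast Nat.succ_le_of_lt this
    push_cast
    rw [pow_succ]
    nlinarith [ih, h2, (Nat.cast_nonneg m : (0:ℝ) ≤ m)]

/-- The logarithmic derivative in `g` of `g^(1/24) * ∏ (1 + (-g)^n)`. -/
noncomputable def logDerivF (g : ℝ) : ℝ :=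
  1 / (24 * g) + ∑' n : ℕ, ((n : ℝ) + 1) * (-1) ^ (n + 1) * g ^ n / (1 + (-g) ^ (n + 1))

theorem logDerivF_deriv_neg (g : ℝ) (hg0 : 0 < g) (hg : g ≤ Real.exp (-Real.pi)) :
    deriv logDerivF g < 0 ∧
      -1 / (24 * g ^ 2) +
          ∑' n : ℕ,
            (((n : ℝ) + 1) * (n : ℝ) * (-1) ^ (n + 1) * g ^ ((n : ℤ) - 1) / (1 + (-g) ^ (n + 1))
              - ((n : ℝ) + 1) ^ 2 * g ^ (2 * n) / (1 + (-g) ^ (n + 1)) ^ 2) < 0 := by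
  -- g < 1/19
  have hg19 : g < 1 / 19 := by
    have hpi := Real.pi_gt_three
    have h3 : Real.exp (-Real.pi) ≤ Real.exp (-3) := Real.exp_le_exp.mpr (by linarith)
    have he : (19 : ℝ) < Real.exp 3 := by
      have h1 := Real.exp_one_gt_d9
      have h2 : Real.exp 3 = Real.exp 1 ^ 3 := by
        rw [show (3:ℝ) = (3:ℕ) * 1 by norm_num, Real.exp_nat_mul]
      rw [h2]
      have h1' : (2.7:ℝ) < Real.exp 1 := by
        have : (2.7:ℝ) < 2.7182818283 := by norm_num
        linarith
      nlinarith [Real.exp_pos 1, h1', mul_pos (Real.exp_pos 1) (Real.exp_pos 1)]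
    have h4 : Real.exp (-3) < 1 / 19 := by
      rw [Real.exp_neg]
      rw [inv_lt_comm₀ (Real.exp_pos 3) (by norm_num)]
      simpa using he
    linarith
  have hg1 : g < 1 := by linarith
  have hgt : g ∈ Set.Ioo (0:ℝ) (1/19) := ⟨hg0, hg19⟩
  have hv : (0:ℝ) < 1 - g := by linarith
  -- summability of the derivative series at g
  have hSf' : Summable (fun n => Fterm' n g) :=
    Summable.of_norm_bounded summable_u (fun n => Fterm'_bound hg0 hg19.le n)
  -- termwise differentiation
  have hsum : HasDerivAt (fun z => ∑' n, Fterm n z) (∑' n, Fterm' n g) g := by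
    apply hasDerivAt_tsum_of_isPreconnected summable_u
      isOpen_Ioo (convex_Ioo (0:ℝ) (1/19)).isPreconnected
      (fun n y hy => hasDerivAt_Fterm hy.1 (lt_trans hy.2 (by norm_num)) n)
      (fun n y hy => Fterm'_bound hy.1 hy.2.le n) hgt ?_ hgt
    exact Summable.of_norm_bounded summable_u (fun n => Fterm_bound hg0 hg19.le n)
  have h24 : HasDerivAt (fun y : ℝ => 1/(24*y)) (-1/(24*g^2)) g := by
    have h := ((hasDerivAt_id g).const_mul (24:ℝ)).inv (by positivity)
    simp only [one_div]
    refine h.congr_deriv ?_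
    show -(24*1)/(24*g)^2 = -1/(24*g^2)
    rw [div_eq_div_iff (by positivity) (by positivity)]; ring
  have hF : HasDerivAt logDerivF (-1/(24*g^2) + ∑' n, Fterm' n g) g := h24.add hsum
  -- identify the series with the statement's series
  have hTeq : (∑' n, Fterm' n g) =
      ∑' n : ℕ,
        (((n : ℝ) + 1) * (n : ℝ) * (-1) ^ (n + 1) * g ^ ((n : ℤ) - 1) / (1 + (-g) ^ (n + 1))
          - ((n : ℝ) + 1) ^ 2 * g ^ (2 * n) / (1 + (-g) ^ (n + 1)) ^ 2) := by
    apply tsum_congr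
    intro n
    cases n with
    | zero => simp [Fterm']
    | succ m =>
      have hzp : g ^ (((m+1 : ℕ) : ℤ) - 1) = g ^ m := by
        rw [show (((m+1 : ℕ) : ℤ) - 1) = (m : ℤ) by push_cast; ring, zpow_natCast]
      rw [Fterm', hzp, Nat.add_sub_cancel]
  -- bound the series by a geometric series
  set b : ℕ → ℝ := fun n => if n = 0 then 0 else 6 * (2*g)^(n-1) / (1-g) with hb
  have hbs : HasSum b (6/(1-g) * (1-2*g)⁻¹) := by
    have h0 : HasSum (fun k : ℕ => 6/(1-g) * (2*g)^k) (6/(1-g) * (1-2*g)⁻¹) :=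
      (hasSum_geometric_of_lt_one (by positivity) (by linarith)).mul_left _
    have heq : (fun k : ℕ => b (k+1)) = fun k : ℕ => 6/(1-g) * (2*g)^k := by
      funext k
      simp only [hb, if_neg (Nat.succ_ne_zero k), Nat.add_sub_cancel]
      ring
    have h1 : HasSum (fun k : ℕ => b (k+1)) (6/(1-g) * (1-2*g)⁻¹) := heq ▸ h0
    have h2 := (hasSum_nat_add_iff (f := b) 1).mp h1
    simpa [hb] using h2
  have hterm : ∀ n : ℕ, Fterm' n g ≤ b n := by
    intro n
    have hvd : (0:ℝ) < 1 + (-g) ^ (n + 1) := by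
      have := denom_lb hg0.le hg1.le n; linarith
    cases n with
    | zero =>
      simp only [Fterm', hb, if_pos rfl]
      simp only [Nat.cast_zero, mul_zero, zero_mul, zero_div, zero_sub, Nat.zero_sub]
      have : (0:ℝ) ≤ ((0:ℝ) + 1) ^ 2 * g ^ (2 * 0) / (1 + (-g) ^ (0 + 1)) ^ 2 := by positivity
      linarith
    | succ m =>
      set n := m + 1
      have hvd' : 1 - g ≤ 1 + (-g) ^ (n + 1) := by
        have := denom_lb hg0.le hg1.le n; linarith
      have hBpos : (0:ℝ) ≤ ((n : ℝ) + 1) ^ 2 * g ^ (2 * n) / (1 + (-g) ^ (n + 1)) ^ 2 := by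
        positivity
      have hAle : ((n : ℝ) + 1) * (n : ℝ) * (-1) ^ (n + 1) * g ^ (n - 1) / (1 + (-g) ^ (n + 1))
          ≤ ((n : ℝ) + 1) * (n : ℝ) * g ^ (n - 1) / (1 - g) := by
        have hnum : ((n : ℝ) + 1) * (n : ℝ) * (-1) ^ (n + 1) * g ^ (n - 1)
            ≤ ((n : ℝ) + 1) * (n : ℝ) * g ^ (n - 1) := by
          have hc : ((-1:ℝ)) ^ (n+1) ≤ 1 := by
            rcases Nat.even_or_odd (n+1) with he | ho
            · rw [he.neg_one_pow]
            · rw [ho.neg_one_pow]; norm_num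
          nlinarith [mul_nonneg (mul_nonneg (by positivity : (0:ℝ) ≤ (n:ℝ)+1)
            (Nat.cast_nonneg n : (0:ℝ) ≤ (n:ℝ))) (by positivity : (0:ℝ) ≤ g ^ (n-1)),
            (by positivity : (0:ℝ) ≤ ((n:ℝ)+1) * (n:ℝ) * g^(n-1))]
        calc ((n : ℝ) + 1) * (n : ℝ) * (-1) ^ (n + 1) * g ^ (n - 1) / (1 + (-g) ^ (n + 1))
            ≤ ((n : ℝ) + 1) * (n : ℝ) * g ^ (n - 1) / (1 + (-g) ^ (n + 1)) :=
              div_le_div₀ (by positivity) hnum hvd le_rfl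
          _ ≤ ((n : ℝ) + 1) * (n : ℝ) * g ^ (n - 1) / (1 - g) :=
              div_le_div₀ (by positivity) le_rfl hv hvd'
      have hApow : ((n : ℝ) + 1) * (n : ℝ) * g ^ (n - 1) / (1 - g) ≤ b n := by
        have h1 : ((n : ℝ) + 1) * (n : ℝ) * g ^ (n - 1) ≤ 3 * 2 ^ n * g ^ (n - 1) :=
          mul_le_mul_of_nonneg_right (nat_mul_le_pow n) (by positivity)
        have h2 : (3 : ℝ) * 2 ^ n * g ^ (n - 1) = 6 * (2*g) ^ (n-1) := by
          show (3 : ℝ) * 2 ^ (m+1) * g ^ m = 6 * (2*g) ^ m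
          rw [mul_pow, pow_succ]
          ring
        have h3 : b n = 6 * (2*g) ^ (n-1) / (1-g) := by
          simp only [hb]; exact if_neg (Nat.succ_ne_zero m)
        rw [h3, ← h2]
        exact div_le_div₀ (by positivity) h1 hv le_rfl
      calc Fterm' n g ≤ ((n : ℝ) + 1) * (n : ℝ) * (-1) ^ (n + 1) * g ^ (n - 1) / (1 + (-g) ^ (n + 1)) := by
            rw [Fterm']; linarith [hBpos]
        _ ≤ ((n : ℝ) + 1) * (n : ℝ) * g ^ (n - 1) / (1 - g) := hAle
        _ ≤ b n := hApow
  have hS_le : (∑' n, Fterm' n g) ≤ 6/(1-g) * (1-2*g)⁻¹ := by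
    rw [← hbs.tsum_eq]
    exact Summable.tsum_le_tsum hterm hSf' hbs.summable
  have hfinal : -1/(24*g^2) + (∑' n, Fterm' n g) < 0 := by
    have h2g : (0:ℝ) < 1 - 2*g := by linarith
    have hlt : 6/(1-g) * (1-2*g)⁻¹ < 1/(24*g^2) := by
      have e1 : 6/(1-g) * (1-2*g)⁻¹ = 6/((1-g)*(1-2*g)) := by
        field_simp
      rw [e1, div_lt_div_iff₀ (mul_pos hv h2g) (by positivity)]
      nlinarith [mul_pos hg0 hg0, mul_lt_mul_of_pos_left hg19 hg0]
    have h24pos : -1/(24*g^2) = -(1/(24*g^2)) := by ring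
    linarith
  constructor
  · rw [hF.deriv]
    exact hfinal
  · have : -1 / (24 * g ^ 2) = -1/(24*g^2) := by ring
    rw [this, ← hTeq]
    exact hfinal
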